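/- arXiv:1907.11588 — 4 statements merged into one kernel-verified Lean document; each statement's English description precedes it below -/
import Mathlib

section
/- Let X be a separable Banach space with its Borel σ-algebra, (Ω,F,P) a probability space with a filtration (F_n)_{n≥0}, and let (d_n)_{n≥1}, (e_n)_{n≥1} be X-valued adapted sequences (each d_n, e_n is F_n-measurable). Let (r_n)_{n≥1} be mutually independent Rademacher random variables whose joint σ-algebra is independent of F_∞ := σ(⋃_n F_n). Define the enlarged filtration G_n := σ(F_n ∪ σ(r_1,…,r_n)). Then for every n ≥ 1 and every Borel set A ⊆ X one has, almost surely, E[1_A(r_n d_n) | G_{n-1}] = (1/2) E[1_A(d_n) | F_{n-1}] + (1/2) E[1_{-A}(d_n) | F_{n-1}]. Consequently, if (d_n) and (e_n) are tangent with respect to (F_n), then (r_n d_n) and (r_n e_n) are tangent with respect to (G_n), and each of them is conditionally symmetric, i.e., E[1_A(r_n d_n) | G_{n-1}] = E[1_{-A}(r_n d_n) | G_{n-1}] almost surely for all Borel A ⊆ X and all n. -/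
open MeasureTheory ProbabilityTheory Filter Set
open scoped ENNReal NNReal Topology Pointwise

/-- Two `X`-valued adapted sequences are *tangent* with respect to the (not necessarily
filtered) family of σ-algebras `𝒢`: for every `n ≥ 1` and every Borel set `A ⊆ X`,
`E[1_A(d n) | 𝒢 (n-1)] = E[1_A(e n) | 𝒢 (n-1)]` almost surely. -/
def AreTangent {Ω X : Type*} [MeasurableSpace X]
    {mΩ : MeasurableSpace Ω} (μ : Measure Ω) (𝒢 : ℕ → MeasurableSpace Ω)
    (d e : ℕ → Ω → X) : Prop :=
  ∀ n : ℕ, 1 ≤ n → ∀ A : Set X, MeasurableSet A →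
    μ[fun ω => A.indicator (fun _ => (1 : ℝ)) (d n ω) | 𝒢 (n - 1)]
      =ᵐ[μ] μ[fun ω => A.indicator (fun _ => (1 : ℝ)) (e n ω) | 𝒢 (n - 1)]

/-- The filtration `G n = σ(ℱ n ∪ σ(r 1, …, r n))` enlarged by the random signs `r`. -/
def enlargedFiltration {Ω : Type*} {mΩ : MeasurableSpace Ω} (ℱ : Filtration ℕ mΩ)
    (r : ℕ → Ω → ℝ) : ℕ → MeasurableSpace Ω :=
  fun n => (ℱ n : MeasurableSpace Ω) ⊔
    ⨆ k ∈ Finset.Icc 1 n, MeasurableSpace.comap (r k) inferInstance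

lemma sup_eq_generateFrom_inter {Ω : Type*} (m₁ m₂ : MeasurableSpace Ω) :
    m₁ ⊔ m₂ = MeasurableSpace.generateFrom
      {s | ∃ t₁ t₂, MeasurableSet[m₁] t₁ ∧ MeasurableSet[m₂] t₂ ∧ s = t₁ ∩ t₂} := by
  refine le_antisymm (sup_le ?_ ?_) (MeasurableSpace.generateFrom_le ?_)
  · intro s hs
    exact MeasurableSpace.measurableSet_generateFrom
      ⟨s, univ, hs, MeasurableSet.univ, (inter_univ s).symm⟩
  · intro s hs
    exact MeasurableSpace.measurableSet_generateFrom
      ⟨univ, s, MeasurableSet.univ, hs, (univ_inter s).symm⟩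
  · rintro s ⟨t₁, t₂, h₁, h₂, rfl⟩
    exact ((le_sup_left : m₁ ≤ m₁ ⊔ m₂) t₁ h₁).inter ((le_sup_right : m₂ ≤ m₁ ⊔ m₂) t₂ h₂)


def signAlgebra {Ω : Type*} (r : ℕ → Ω → ℝ) (n : ℕ) : MeasurableSpace Ω :=
  ⨆ k ∈ Finset.Icc 1 n, MeasurableSpace.comap (r k) inferInstance

theorem key_condexp {Ω X : Type*} [NormedAddCommGroup X] [NormedSpace ℝ X]
    [MeasurableSpace X] [BorelSpace X]
    {mΩ : MeasurableSpace Ω} (μ : Measure Ω) [IsProbabilityMeasure μ]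
    (ℱ : Filtration ℕ mΩ) (d : ℕ → Ω → X)
    (hd : ∀ n, StronglyMeasurable[ℱ n] (d n))
    (r : ℕ → Ω → ℝ) (hr_meas : ∀ n, Measurable (r n))
    (hr_rad : ∀ n, μ {ω | r n ω = 1} = 1 / 2 ∧ μ {ω | r n ω = -1} = 1 / 2)
    (hr_indep : iIndepFun r μ)
    (hr_F : Indep (⨆ n, MeasurableSpace.comap (r n) inferInstance)
      (⨆ n, (ℱ n : MeasurableSpace Ω)) μ)
    (n : ℕ) (hn : 1 ≤ n) (A : Set X) (hA : MeasurableSet A) :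
    μ[fun ω => A.indicator (fun _ => (1 : ℝ)) (r n ω • d n ω) | enlargedFiltration ℱ r (n - 1)]
      =ᵐ[μ] fun ω =>
        (1 / 2) * (μ[fun ω' => A.indicator (fun _ => (1 : ℝ)) (d n ω') | ℱ (n - 1)]) ω +
        (1 / 2) * (μ[fun ω' => (-A).indicator (fun _ => (1 : ℝ)) (d n ω') | ℱ (n - 1)]) ω := by
  classical
  have hG : enlargedFiltration ℱ r (n - 1) = (ℱ (n - 1) : MeasurableSpace Ω) ⊔ signAlgebra r (n - 1) := rfl
  have hms_le_sup : signAlgebra r (n - 1) ≤ ⨆ k, MeasurableSpace.comap (r k) inferInstance :=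
    iSup₂_le fun k _ => le_iSup (fun k => MeasurableSpace.comap (r k) inferInstance) k
  have hms_le : signAlgebra r (n - 1) ≤ mΩ := iSup₂_le fun k _ => (hr_meas k).comap_le
  have hm : enlargedFiltration ℱ r (n - 1) ≤ mΩ := by
    rw [hG]; exact sup_le (ℱ.le _) hms_le
  haveI : SigmaFinite (μ.trim hm) := inferInstance
  haveI : SigmaFinite (μ.trim (ℱ.le (n - 1))) := inferInstance
  -- basic sets
  have hdm : Measurable[ℱ n] (d n) := (hd n).measurable
  set SA : Set Ω := d n ⁻¹' A with hSAdef
  set SB : Set Ω := d n ⁻¹' (-A) with hSBdef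
  have hAneg : MeasurableSet (-A) := hA.neg
  have hSA_n : MeasurableSet[ℱ n] SA := hdm hA
  have hSB_n : MeasurableSet[ℱ n] SB := hdm hAneg
  have hSA : MeasurableSet SA := ℱ.le n _ hSA_n
  have hSB : MeasurableSet SB := ℱ.le n _ hSB_n
  have hSA_sup : MeasurableSet[⨆ k, (ℱ k : MeasurableSpace Ω)] SA :=
    (le_iSup (fun k => (ℱ k : MeasurableSpace Ω)) n) _ hSA_n
  have hSB_sup : MeasurableSet[⨆ k, (ℱ k : MeasurableSpace Ω)] SB :=
    (le_iSup (fun k => (ℱ k : MeasurableSpace Ω)) n) _ hSB_n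
  set R1 : Set Ω := {ω | r n ω = 1} with hR1def
  set R2 : Set Ω := {ω | r n ω = -1} with hR2def
  have hR1pre : r n ⁻¹' {1} = R1 := by ext ω; simp [hR1def]
  have hR2pre : r n ⁻¹' {-1} = R2 := by ext ω; simp [hR2def]
  have hR1c : MeasurableSet[MeasurableSpace.comap (r n) inferInstance] R1 :=
    ⟨{1}, measurableSet_singleton 1, hR1pre⟩
  have hR2c : MeasurableSet[MeasurableSpace.comap (r n) inferInstance] R2 :=
    ⟨{-1}, measurableSet_singleton (-1), hR2pre⟩
  have hR1 : MeasurableSet R1 := (hr_meas n).comap_le _ hR1c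
  have hR2 : MeasurableSet R2 := (hr_meas n).comap_le _ hR2c
  have hR1_sup : MeasurableSet[⨆ k, MeasurableSpace.comap (r k) inferInstance] R1 :=
    (le_iSup (fun k => MeasurableSpace.comap (r k) inferInstance) n) _ hR1c
  have hR2_sup : MeasurableSet[⨆ k, MeasurableSpace.comap (r k) inferInstance] R2 :=
    (le_iSup (fun k => MeasurableSpace.comap (r k) inferInstance) n) _ hR2c
  have hμR1 : μ R1 = 1 / 2 := (hr_rad n).1
  have hμR2 : μ R2 = 1 / 2 := (hr_rad n).2
  have hdisjR : Disjoint R1 R2 := by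
    rw [Set.disjoint_left]
    intro ω h1 h2
    have e1 : r n ω = 1 := h1
    have e2 : r n ω = -1 := h2
    rw [e1] at e2; norm_num at e2
  -- independence facts
  have hmn : Indep (signAlgebra r (n - 1)) (MeasurableSpace.comap (r n) inferInstance) μ := by
    have h_le : ∀ k, MeasurableSpace.comap (r k) (inferInstance : MeasurableSpace ℝ) ≤ mΩ :=
      fun k => (hr_meas k).comap_le
    have h2 := indep_biSup_compl h_le hr_indep.iIndep ({n}ᶜ)
    rw [compl_compl] at h2
    refine indep_of_indep_of_le_right (indep_of_indep_of_le_left h2 ?_) ?_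
    · refine iSup₂_le fun k hk => ?_
      have hkn : k ∈ ({n}ᶜ : Set ℕ) := by
        have := Finset.mem_Icc.mp hk
        simp only [Set.mem_compl_iff, Set.mem_singleton_iff]
        omega
      exact le_biSup (fun k => MeasurableSpace.comap (r k) (inferInstance : MeasurableSpace ℝ)) hkn
    · exact le_biSup (fun k => MeasurableSpace.comap (r k) (inferInstance : MeasurableSpace ℝ))
        (Set.mem_singleton n)
  have prod_rF : ∀ {s t : Set Ω},
      MeasurableSet[⨆ k, MeasurableSpace.comap (r k) inferInstance] s →
      MeasurableSet[⨆ k, (ℱ k : MeasurableSpace Ω)] t → μ (s ∩ t) = μ s * μ t :=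
    fun hs ht => (hr_F.indepSet_of_measurableSet hs ht).measure_inter_eq_mul
  have prod_r : ∀ {s t : Set Ω}, MeasurableSet[signAlgebra r (n - 1)] s →
      MeasurableSet[MeasurableSpace.comap (r n) inferInstance] t → μ (s ∩ t) = μ s * μ t :=
    fun hs ht => (hmn.indepSet_of_measurableSet hs ht).measure_inter_eq_mul
  -- the symmetrized indicator set
  set E : Set Ω := (R1 ∩ SA) ∪ (R2 ∩ SB) with hEdef
  have hE : MeasurableSet E := (hR1.inter hSA).union (hR2.inter hSB)
  set f' : Ω → ℝ := E.indicator (fun _ => (1 : ℝ)) with hf'def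
  have hf'_int : Integrable f' μ := (integrable_const 1).indicator hE
  -- integrands for the conditional expectations
  set fA : Ω → ℝ := fun ω => A.indicator (fun _ => (1 : ℝ)) (d n ω) with hfAdef
  set fB : Ω → ℝ := fun ω => (-A).indicator (fun _ => (1 : ℝ)) (d n ω) with hfBdef
  have hfA : fA = SA.indicator (fun _ => (1 : ℝ)) := by
    funext ω; by_cases h : d n ω ∈ A <;> simp [hfAdef, Set.indicator_apply, h, hSAdef]
  have hfB : fB = SB.indicator (fun _ => (1 : ℝ)) := by
    funext ω
    by_cases h : d n ω ∈ -A
    · have h' : -d n ω ∈ A := Set.mem_neg.mp h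
      simp [hfBdef, Set.indicator_apply, hSBdef, h, h']
    · have h' : ¬(-d n ω ∈ A) := fun hh => h (Set.mem_neg.mpr hh)
      simp [hfBdef, Set.indicator_apply, hSBdef, h, h']
  have hfA_int : Integrable fA μ := by rw [hfA]; exact (integrable_const 1).indicator hSA
  have hfB_int : Integrable fB μ := by rw [hfB]; exact (integrable_const 1).indicator hSB
  set g : Ω → ℝ := fun ω =>
    (1 / 2) * (μ[fA | ℱ (n - 1)]) ω + (1 / 2) * (μ[fB | ℱ (n - 1)]) ω with hgdef
  have hg_int : Integrable g μ :=
    ((integrable_condExp).const_mul _).add ((integrable_condExp).const_mul _)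
  have hg_sm : StronglyMeasurable[ℱ (n - 1)] g :=
    (stronglyMeasurable_condExp.const_mul _).add (stronglyMeasurable_condExp.const_mul _)
  -- step 1 : a.e. identification of the integrand
  have h_ae : (fun ω => A.indicator (fun _ => (1 : ℝ)) (r n ω • d n ω)) =ᵐ[μ] f' := by
    have hcover : μ (R1 ∪ R2)ᶜ = 0 := by
      have h1 : μ (R1 ∪ R2) = 1 := by
        rw [measure_union hdisjR hR2, hμR1, hμR2, one_div, ENNReal.inv_two_add_inv_two]
      rw [measure_compl (hR1.union hR2) (measure_ne_top μ _), measure_univ, h1, tsub_self]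
    have h2 : ∀ᵐ ω ∂μ, ω ∉ (R1 ∪ R2)ᶜ := measure_eq_zero_iff_ae_notMem.mp hcover
    filter_upwards [h2] with ω hω
    have hω' : ω ∈ R1 ∪ R2 := Set.not_notMem.mp hω
    rcases hω' with h1 | h2
    · have hr1 : r n ω = 1 := h1
      have hsmul : r n ω • d n ω = d n ω := by rw [hr1, one_smul]
      rw [hsmul]
      by_cases hmem : d n ω ∈ A
      · have hE' : ω ∈ E := Or.inl ⟨h1, hmem⟩
        simp [hf'def, Set.indicator_apply, hmem, hE']
      · have hE' : ω ∉ E := by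
          rintro (⟨-, h⟩ | ⟨h2', -⟩)
          · exact hmem h
          · have e2 : r n ω = -1 := h2'
            rw [hr1] at e2; norm_num at e2
        simp [hf'def, Set.indicator_apply, hmem, hE']
    · have hr2 : r n ω = -1 := h2
      have hsmul : r n ω • d n ω = -(d n ω) := by rw [hr2, neg_one_smul]
      rw [hsmul]
      by_cases hmem : -(d n ω) ∈ A
      · have hmemneg : d n ω ∈ -A := Set.mem_neg.mpr hmem
        have hE' : ω ∈ E := Or.inr ⟨h2, hmemneg⟩
        simp [hf'def, Set.indicator_apply, hmem, hE']
      · have hE' : ω ∉ E := by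
          rintro (⟨h1', -⟩ | ⟨-, h⟩)
          · have e1 : r n ω = 1 := h1'
            rw [e1] at hr2; norm_num at hr2
          · exact hmem (Set.mem_neg.mp h)
        simp [hf'def, Set.indicator_apply, hmem, hE']
  -- step 2 : the set-integral identity on the generating π-system
  have hbasic : ∀ s ∈ {s : Set Ω | ∃ t₁ t₂, MeasurableSet[(ℱ (n - 1) : MeasurableSpace Ω)] t₁ ∧
      MeasurableSet[signAlgebra r (n - 1)] t₂ ∧ s = t₁ ∩ t₂},
      ∫ x in s, g x ∂μ = ∫ x in s, f' x ∂μ := by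
    rintro s ⟨F, R, hF, hR, rfl⟩
    have hFm : MeasurableSet F := ℱ.le _ _ hF
    have hRm : MeasurableSet R := hms_le _ hR
    have hFR : MeasurableSet (F ∩ R) := hFm.inter hRm
    have hF_sup : MeasurableSet[⨆ k, (ℱ k : MeasurableSpace Ω)] F :=
      (le_iSup (fun k => (ℱ k : MeasurableSpace Ω)) (n - 1)) _ hF
    have hR_sup : MeasurableSet[⨆ k, MeasurableSpace.comap (r k) inferInstance] R :=
      hms_le_sup _ hR
    -- RHS
    have hsplit : (F ∩ R) ∩ E = ((R ∩ R1) ∩ (F ∩ SA)) ∪ ((R ∩ R2) ∩ (F ∩ SB)) := by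
      ext ω
      simp only [hEdef, Set.mem_inter_iff, Set.mem_union]
      tauto
    have hdisj2 : Disjoint ((R ∩ R1) ∩ (F ∩ SA)) ((R ∩ R2) ∩ (F ∩ SB)) := by
      refine hdisjR.mono ?_ ?_
      · exact Set.inter_subset_left.trans Set.inter_subset_right
      · exact Set.inter_subset_left.trans Set.inter_subset_right
    have hμ1 : μ ((R ∩ R1) ∩ (F ∩ SA)) = μ R * (1 / 2) * μ (F ∩ SA) := by
      rw [prod_rF (hR_sup.inter hR1_sup) (hF_sup.inter hSA_sup), prod_r hR hR1c, hμR1]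
    have hμ2 : μ ((R ∩ R2) ∩ (F ∩ SB)) = μ R * (1 / 2) * μ (F ∩ SB) := by
      rw [prod_rF (hR_sup.inter hR2_sup) (hF_sup.inter hSB_sup), prod_r hR hR2c, hμR2]
    have hRHS : ∫ x in F ∩ R, f' x ∂μ = (μ ((F ∩ R) ∩ E)).toReal := by
      rw [hf'def, setIntegral_indicator hE, setIntegral_const, smul_eq_mul, mul_one, measureReal_def]
    have hμE : μ ((F ∩ R) ∩ E) = μ R * (1 / 2) * μ (F ∩ SA) + μ R * (1 / 2) * μ (F ∩ SB) := by
      rw [hsplit, measure_union hdisj2 ((hRm.inter hR2).inter (hFm.inter hSB)), hμ1, hμ2]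
    -- LHS
    set u : Ω → ℝ := R.indicator (fun _ => (1 : ℝ)) with hudef
    set v : Ω → ℝ := F.indicator g with hvdef
    have huv : (F ∩ R).indicator g = u * v := by
      funext ω
      by_cases hωR : ω ∈ R <;> by_cases hωF : ω ∈ F <;>
        simp [hudef, hvdef, Set.indicator_apply, hωR, hωF, Set.mem_inter_iff]
    have hu_int : Integrable u μ := (integrable_const 1).indicator hRm
    have hv_int : Integrable v μ := hg_int.indicator hFm
    have hu_m : Measurable[signAlgebra r (n - 1)] u := by
      have h1 : Measurable[signAlgebra r (n - 1)] (fun _ : Ω => (1 : ℝ)) := measurable_const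
      exact h1.indicator hR
    have hv_m : Measurable[⨆ k, (ℱ k : MeasurableSpace Ω)] v := by
      have h1 : Measurable[⨆ k, (ℱ k : MeasurableSpace Ω)] g :=
        ((hg_sm.mono (le_iSup (fun k => (ℱ k : MeasurableSpace Ω)) (n - 1)))).measurable
      exact h1.indicator hF_sup
    have hIndep : IndepFun u v μ := by
      rw [IndepFun_iff_Indep]
      exact indep_of_indep_of_le_right
        (indep_of_indep_of_le_left hr_F (hu_m.comap_le.trans hms_le_sup)) hv_m.comap_le
    have hLHS : ∫ x in F ∩ R, g x ∂μ = (∫ x, u x ∂μ) * ∫ x, v x ∂μ := by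
      rw [← integral_indicator hFR, huv, ← IndepFun.integral_mul_eq_mul_integral hIndep hu_int.aestronglyMeasurable
        hv_int.aestronglyMeasurable]
    have hu_val : ∫ x, u x ∂μ = (μ R).toReal := by
      rw [hudef, integral_indicator_const (1 : ℝ) hRm, smul_eq_mul, mul_one, measureReal_def]
    have hintA : ∫ x in F, (μ[fA | ℱ (n - 1)]) x ∂μ = (μ (F ∩ SA)).toReal := by
      rw [setIntegral_condExp (ℱ.le (n - 1)) hfA_int hF, hfA, setIntegral_indicator hSA,
        setIntegral_const, smul_eq_mul, mul_one, measureReal_def]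
    have hintB : ∫ x in F, (μ[fB | ℱ (n - 1)]) x ∂μ = (μ (F ∩ SB)).toReal := by
      rw [setIntegral_condExp (ℱ.le (n - 1)) hfB_int hF, hfB, setIntegral_indicator hSB,
        setIntegral_const, smul_eq_mul, mul_one, measureReal_def]
    have hv_val : ∫ x, v x ∂μ
        = (1 / 2) * (μ (F ∩ SA)).toReal + (1 / 2) * (μ (F ∩ SB)).toReal := by
      rw [hvdef, integral_indicator hFm, hgdef]
      rw [integral_add ((integrable_condExp.const_mul (1 / 2 : ℝ)).restrict)
        ((integrable_condExp.const_mul (1 / 2 : ℝ)).restrict), integral_const_mul, integral_const_mul,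
        hintA, hintB]
    rw [hLHS, hu_val, hv_val, hRHS, hμE]
    rw [ENNReal.toReal_add, ENNReal.toReal_mul, ENNReal.toReal_mul, ENNReal.toReal_mul,
      ENNReal.toReal_mul]
    · simp only [ENNReal.toReal_div, ENNReal.toReal_one, ENNReal.toReal_ofNat]
      ring
    · exact ENNReal.mul_ne_top (ENNReal.mul_ne_top (measure_ne_top μ _) (by norm_num))
        (measure_ne_top μ _)
    · exact ENNReal.mul_ne_top (ENNReal.mul_ne_top (measure_ne_top μ _) (by norm_num))
        (measure_ne_top μ _)
  -- step 3 : extend to all measurable sets of the enlarged σ-algebra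
  have hgen : enlargedFiltration ℱ r (n - 1) = MeasurableSpace.generateFrom
      {s : Set Ω | ∃ t₁ t₂, MeasurableSet[(ℱ (n - 1) : MeasurableSpace Ω)] t₁ ∧
        MeasurableSet[signAlgebra r (n - 1)] t₂ ∧ s = t₁ ∩ t₂} := by
    rw [hG]; exact sup_eq_generateFrom_inter _ _
  have hPi : IsPiSystem {s : Set Ω | ∃ t₁ t₂, MeasurableSet[(ℱ (n - 1) : MeasurableSpace Ω)] t₁ ∧
      MeasurableSet[signAlgebra r (n - 1)] t₂ ∧ s = t₁ ∩ t₂} := by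
    rintro s ⟨F₁, Q₁, hF₁, hQ₁, rfl⟩ t ⟨F₂, Q₂, hF₂, hQ₂, rfl⟩ -
    exact ⟨F₁ ∩ F₂, Q₁ ∩ Q₂, hF₁.inter hF₂, hQ₁.inter hQ₂, Set.inter_inter_inter_comm _ _ _ _⟩
  have hsets : ∀ s, MeasurableSet[enlargedFiltration ℱ r (n - 1)] s →
      ∫ x in s, g x ∂μ = ∫ x in s, f' x ∂μ := by
    intro s hs
    refine MeasurableSpace.induction_on_inter (m := enlargedFiltration ℱ r (n - 1))
      (C := fun t _ => ∫ x in t, g x ∂μ = ∫ x in t, f' x ∂μ) hgen hPi (by simp) hbasic ?_ ?_ s hs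
    · intro t ht hCt
      have htm : MeasurableSet t := hm _ ht
      have huniv : ∫ x, g x ∂μ = ∫ x, f' x ∂μ := by
        have := hbasic univ ⟨univ, univ, MeasurableSet.univ, MeasurableSet.univ,
          (univ_inter _).symm⟩
        simpa [Measure.restrict_univ] using this
      have h1 := integral_add_compl htm hg_int
      have h2 := integral_add_compl htm hf'_int
      linarith
    · intro fs hdisj hmeas hC
      have hmeas' : ∀ i, MeasurableSet (fs i) := fun i => hm _ (hmeas i)
      rw [integral_iUnion hmeas' hdisj hg_int.integrableOn,
        integral_iUnion hmeas' hdisj hf'_int.integrableOn]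
      exact tsum_congr hC
  have hmain : g =ᵐ[μ] μ[f' | enlargedFiltration ℱ r (n - 1)] :=
    ae_eq_condExp_of_forall_setIntegral_eq hm hf'_int
      (fun s _ _ => hg_int.integrableOn) (fun s hs _ => hsets s hs)
      ((hg_sm.mono (by rw [hG]; exact le_sup_left)).aestronglyMeasurable)
  calc μ[fun ω => A.indicator (fun _ => (1 : ℝ)) (r n ω • d n ω) | enlargedFiltration ℱ r (n - 1)]
      =ᵐ[μ] μ[f' | enlargedFiltration ℱ r (n - 1)] := condExp_congr_ae h_ae
    _ =ᵐ[μ] g := hmain.symm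

/-- Randomization by independent Rademacher variables: the conditional law of `r n • d n` given
`G (n-1)` is the symmetrization of that of `d n`; consequently tangency is preserved and the
randomized sequences are conditionally symmetric. -/
theorem rademacher_randomization_tangent
    {Ω X : Type*} [NormedAddCommGroup X] [NormedSpace ℝ X] [CompleteSpace X]
    [TopologicalSpace.SeparableSpace X] [MeasurableSpace X] [BorelSpace X]
    {mΩ : MeasurableSpace Ω} (μ : Measure Ω) [IsProbabilityMeasure μ]
    (ℱ : Filtration ℕ mΩ) (d e : ℕ → Ω → X)
    (hd : ∀ n, StronglyMeasurable[ℱ n] (d n)) (he : ∀ n, StronglyMeasurable[ℱ n] (e n))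
    (r : ℕ → Ω → ℝ) (hr_meas : ∀ n, Measurable (r n))
    (hr_rad : ∀ n, μ {ω | r n ω = 1} = 1 / 2 ∧ μ {ω | r n ω = -1} = 1 / 2)
    (hr_indep : iIndepFun r μ)
    (hr_F : Indep (⨆ n, MeasurableSpace.comap (r n) inferInstance)
      (⨆ n, (ℱ n : MeasurableSpace Ω)) μ) :
    (∀ n : ℕ, 1 ≤ n → ∀ A : Set X, MeasurableSet A →
      μ[fun ω => A.indicator (fun _ => (1 : ℝ)) (r n ω • d n ω) | enlargedFiltration ℱ r (n - 1)]
        =ᵐ[μ] fun ω =>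
          (1 / 2) * (μ[fun ω' => A.indicator (fun _ => (1 : ℝ)) (d n ω') | ℱ (n - 1)]) ω +
          (1 / 2) * (μ[fun ω' => (-A).indicator (fun _ => (1 : ℝ)) (d n ω') | ℱ (n - 1)]) ω) ∧
    (AreTangent μ (fun n => (ℱ n : MeasurableSpace Ω)) d e →
      AreTangent μ (enlargedFiltration ℱ r)
          (fun n ω => r n ω • d n ω) (fun n ω => r n ω • e n ω) ∧
      (∀ n : ℕ, 1 ≤ n → ∀ A : Set X, MeasurableSet A →
        μ[fun ω => A.indicator (fun _ => (1 : ℝ)) (r n ω • d n ω) |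
            enlargedFiltration ℱ r (n - 1)]
          =ᵐ[μ] μ[fun ω => (-A).indicator (fun _ => (1 : ℝ)) (r n ω • d n ω) |
            enlargedFiltration ℱ r (n - 1)]) ∧
      (∀ n : ℕ, 1 ≤ n → ∀ A : Set X, MeasurableSet A →
        μ[fun ω => A.indicator (fun _ => (1 : ℝ)) (r n ω • e n ω) |
            enlargedFiltration ℱ r (n - 1)]
          =ᵐ[μ] μ[fun ω => (-A).indicator (fun _ => (1 : ℝ)) (r n ω • e n ω) |
            enlargedFiltration ℱ r (n - 1)])) := by
  have keyd := key_condexp μ ℱ d hd r hr_meas hr_rad hr_indep hr_F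
  have keye := key_condexp μ ℱ e he r hr_meas hr_rad hr_indep hr_F
  refine ⟨fun n hn A hA => keyd n hn A hA, fun ht => ⟨?_, ?_, ?_⟩⟩
  · intro n hn A hA
    have h1 := keyd n hn A hA
    have h2 := keye n hn A hA
    have h3 : μ[fun ω' => A.indicator (fun _ => (1 : ℝ)) (d n ω') | ℱ (n - 1)]
        =ᵐ[μ] μ[fun ω' => A.indicator (fun _ => (1 : ℝ)) (e n ω') | ℱ (n - 1)] :=
      ht n hn A hA
    have h4 : μ[fun ω' => (-A).indicator (fun _ => (1 : ℝ)) (d n ω') | ℱ (n - 1)]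
        =ᵐ[μ] μ[fun ω' => (-A).indicator (fun _ => (1 : ℝ)) (e n ω') | ℱ (n - 1)] :=
      ht n hn (-A) hA.neg
    refine h1.trans (Filter.EventuallyEq.trans ?_ h2.symm)
    filter_upwards [h3, h4] with ω e1 e2
    rw [e1, e2]
  · intro n hn A hA
    have h1 := keyd n hn A hA
    have h2 := keyd n hn (-A) hA.neg
    rw [neg_neg A] at h2
    refine h1.trans (Filter.EventuallyEq.trans ?_ h2.symm)
    filter_upwards with ω
    ring
  · intro n hn A hA
    have h1 := keye n hn A hA
    have h2 := keye n hn (-A) hA.neg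
    rw [neg_neg A] at h2
    refine h1.trans (Filter.EventuallyEq.trans ?_ h2.symm)
    filter_upwards with ω
    ring
end

section
/- Let (Ω,F,P) be a probability space and f, g : Ω → [0,∞) be measurable. Suppose there exist β > 1, δ > 0, and ε > 0 such that P(g > βλ, f ≤ δλ) ≤ ε P(g > λ) for all λ > 0. Let φ : [0,∞) → [0,∞) be a convex function of moderate growth with φ(0) = 0, and let γ < ε^{-1} and η be constants such that φ(βλ) ≤ γ φ(λ) and φ(δ^{-1}λ) ≤ η φ(λ) for all λ > 0, with γε < 1. Then E φ(g) ≤ (γη/(1−γε)) · E φ(f). -/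
open MeasureTheory ProbabilityTheory Filter Set
open scoped ENNReal NNReal Topology

lemma level_aux {Ω : Type*} {mΩ : MeasurableSpace Ω} (μ : Measure Ω) [IsFiniteMeasure μ]
    (X Y Z : Ω → ℝ) (hY : Measurable Y) (hZ : Measurable Z)
    (hX0 : ∀ ω, 0 ≤ X ω) (hY0 : ∀ ω, 0 ≤ Y ω) (hZ0 : ∀ ω, 0 ≤ Z ω)
    (c : ℝ≥0∞) (hc : c ≠ ∞)
    (h : ∀ lam : ℝ, 0 < lam →
      μ {ω | lam < X ω} ≤ c * μ {ω | lam < Y ω} + μ {ω | lam < Z ω})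
    (ψ : ℝ → ℝ) (hψ : Monotone ψ) (hψ0 : ψ 0 = 0) :
    ∀ t : ℝ, 0 < t →
      μ {ω | t < ψ (X ω)} ≤ c * μ {ω | t < ψ (Y ω)} + μ {ω | t < ψ (Z ω)} := by
  intro t ht
  set S : Set ℝ := {l : ℝ | 0 < l ∧ t < ψ l} with hSdef
  have hup : ∀ {l x : ℝ}, l ∈ S → l ≤ x → x ∈ S := by
    intro l x hl hlx
    exact ⟨lt_of_lt_of_le hl.1 hlx, lt_of_lt_of_le hl.2 (hψ hlx)⟩
  have hmem : ∀ (W : Ω → ℝ), (∀ ω, 0 ≤ W ω) → {ω | t < ψ (W ω)} = {ω | W ω ∈ S} := by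
    intro W hW0
    ext ω
    simp only [mem_setOf_eq, hSdef]
    constructor
    · intro h'
      refine ⟨?_, h'⟩
      rcases (hW0 ω).lt_or_eq with h0 | h0
      · exact h0
      · exfalso; rw [← h0, hψ0] at h'; exact absurd h' (not_lt.2 ht.le)
    · exact And.right
  rw [hmem X hX0, hmem Y hY0, hmem Z hZ0]
  by_cases hS : S.Nonempty
  · have hbdd : BddBelow S := ⟨0, fun l hl => hl.1.le⟩
    set a := sInf S with ha
    by_cases haS : a ∈ S
    · -- S = [a, ∞), use decreasing approximation from below
      have hset : ∀ (W : Ω → ℝ), {ω | W ω ∈ S} = {ω | a ≤ W ω} := by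
        intro W; ext ω
        exact ⟨fun h' => csInf_le hbdd h', fun h' => hup haS h'⟩
      rw [hset X, hset Y, hset Z]
      have hapos : 0 < a := haS.1
      set l : ℕ → ℝ := fun n => a - a / (n + 2) with hldef
      have hlpos : ∀ n : ℕ, 0 < l n := by
        intro n
        have hn2 : (1:ℝ) < (n:ℝ) + 2 := by
          have : (0:ℝ) ≤ (n:ℝ) := Nat.cast_nonneg n
          linarith
        have : a / (n + 2) < a := div_lt_self hapos hn2
        simpa [hldef] using sub_pos.2 this
      have hllt : ∀ n : ℕ, l n < a := fun n =>
        sub_lt_self a (div_pos hapos (by positivity))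
      have hlim : Tendsto l atTop (𝓝 a) := by
        have h1 : Tendsto (fun n : ℕ => a / (n + 2)) atTop (𝓝 0) := by
          apply Tendsto.div_atTop (tendsto_const_nhds)
          exact tendsto_atTop_add_const_right _ 2 tendsto_natCast_atTop_atTop
        simpa using tendsto_const_nhds.sub h1
      have hmonol : Monotone l := by
        intro m n hmn
        have : a / (n + 2) ≤ a / (m + 2) := by
          apply div_le_div_of_nonneg_left hapos.le (by positivity)
          exact_mod_cast by exact_mod_cast add_le_add_left (Nat.cast_le.2 hmn) 2
        simpa [hldef] using sub_le_sub_left this a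
      have hInter : ∀ (W : Ω → ℝ), (⋂ n : ℕ, {ω | l n < W ω}) = {ω | a ≤ W ω} := by
        intro W; ext ω
        simp only [mem_iInter, mem_setOf_eq]
        constructor
        · intro h'
          exact le_of_tendsto hlim (Eventually.of_forall fun n => (h' n).le)
        · intro h' n; exact lt_of_lt_of_le (hllt n) h'
      have htY : Tendsto (fun n => μ {ω | l n < Y ω}) atTop (𝓝 (μ {ω | a ≤ Y ω})) := by
        rw [← hInter Y]
        refine tendsto_measure_iInter_atTop
          (fun n => (hY measurableSet_Ioi).nullMeasurableSet) ?_ ⟨0, measure_ne_top μ _⟩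
        intro m n hmn ω hω
        simp only [mem_setOf_eq] at hω ⊢
        exact lt_of_le_of_lt (hmonol hmn) hω
      have htZ : Tendsto (fun n => μ {ω | l n < Z ω}) atTop (𝓝 (μ {ω | a ≤ Z ω})) := by
        rw [← hInter Z]
        refine tendsto_measure_iInter_atTop
          (fun n => (hZ measurableSet_Ioi).nullMeasurableSet) ?_ ⟨0, measure_ne_top μ _⟩
        intro m n hmn ω hω
        simp only [mem_setOf_eq] at hω ⊢
        exact lt_of_le_of_lt (hmonol hmn) hω
      have htot : Tendsto (fun n => c * μ {ω | l n < Y ω} + μ {ω | l n < Z ω}) atTop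
          (𝓝 (c * μ {ω | a ≤ Y ω} + μ {ω | a ≤ Z ω})) :=
        (ENNReal.Tendsto.const_mul htY (Or.inr hc)).add htZ
      refine ge_of_tendsto' htot fun n => ?_
      refine le_trans (le_trans (measure_mono ?_) (h (l n) (hlpos n))) le_rfl
      intro ω hω
      simp only [mem_setOf_eq] at hω ⊢
      exact lt_of_lt_of_le (hllt n) hω
    · by_cases hap : 0 < a
      · have hset : ∀ (W : Ω → ℝ), {ω | W ω ∈ S} = {ω | a < W ω} := by
          intro W; ext ω
          constructor
          · intro h'
            exact lt_of_le_of_ne (csInf_le hbdd h') fun heq => haS (show sInf S ∈ S by rw [heq]; exact h')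
          · intro h'
            obtain ⟨s, hsS, hs⟩ := exists_lt_of_csInf_lt hS h'
            exact hup hsS hs.le
        rw [hset X, hset Y, hset Z]
        exact h a hap
      · push_neg at hap
        have hset : ∀ (W : Ω → ℝ), {ω | W ω ∈ S} = {ω | 0 < W ω} := by
          intro W; ext ω
          constructor
          · intro h'; exact h'.1
          · intro h'
            obtain ⟨s, hsS, hs⟩ := exists_lt_of_csInf_lt hS (lt_of_le_of_lt hap h')
            exact hup hsS hs.le
        rw [hset X, hset Y, hset Z]
        have hu : {ω | 0 < X ω} = ⋃ n : ℕ, {ω | 1 / (n + 1 : ℝ) < X ω} := by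
          ext ω
          simp only [mem_iUnion, mem_setOf_eq]
          constructor
          · intro h'; exact exists_nat_one_div_lt h'
          · rintro ⟨n, hn⟩; exact lt_trans (by positivity) hn
        rw [hu]
        have hdir : Directed (· ⊆ ·) (fun n : ℕ => {ω | 1 / (n + 1 : ℝ) < X ω}) := by
          apply Monotone.directed_le
          intro m n hmn ω hω
          simp only [mem_setOf_eq] at hω ⊢
          refine lt_of_le_of_lt ?_ hω
          apply one_div_le_one_div_of_le (by positivity)
          exact_mod_cast add_le_add_left (Nat.cast_le.2 hmn) 1
        rw [hdir.measure_iUnion]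
        refine iSup_le fun n => ?_
        refine le_trans (h (1 / (n + 1 : ℝ)) (by positivity)) ?_
        gcongr
        · positivity
        · positivity
  · have : {ω | X ω ∈ S} = ∅ := by
      ext ω; simp only [mem_setOf_eq, mem_empty_iff_false, iff_false]
      exact fun h' => hS ⟨_, h'⟩
    rw [this]
    simp

/-- **Burkholder's good-λ lemma.** If `P(g > βλ, f ≤ δλ) ≤ ε P(g > λ)` for all `λ > 0`, and
`φ` is a convex function of moderate growth with `φ(0) = 0` satisfying `φ(βλ) ≤ γ φ(λ)` and
`φ(δ⁻¹λ) ≤ η φ(λ)` with `γε < 1`, then `E φ(g) ≤ (γη/(1-γε)) E φ(f)` (in `[0,∞]`). -/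
theorem good_lambda_phi_estimate
    {Ω : Type*} {mΩ : MeasurableSpace Ω} (μ : Measure Ω) [IsProbabilityMeasure μ]
    (f g : Ω → ℝ) (hf : Measurable f) (hg : Measurable g)
    (hf0 : ∀ ω, 0 ≤ f ω) (hg0 : ∀ ω, 0 ≤ g ω)
    (β δ ε : ℝ) (hβ : 1 < β) (hδ : 0 < δ) (hε : 0 < ε)
    (hgood : ∀ lam : ℝ, 0 < lam →
      μ {ω | β * lam < g ω ∧ f ω ≤ δ * lam} ≤ ENNReal.ofReal ε * μ {ω | lam < g ω})
    (φ : ℝ → ℝ) (hconv : ConvexOn ℝ (Set.Ici (0 : ℝ)) φ) (hφ0 : φ 0 = 0)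
    (hφnonneg : ∀ t : ℝ, 0 ≤ t → 0 ≤ φ t)
    (hmod : ∃ α : ℝ, 0 < α ∧ ∀ t : ℝ, 0 ≤ t → φ (2 * t) ≤ α * φ t)
    (γ η : ℝ) (hγ : ∀ lam : ℝ, 0 < lam → φ (β * lam) ≤ γ * φ lam)
    (hη : ∀ lam : ℝ, 0 < lam → φ (δ⁻¹ * lam) ≤ η * φ lam)
    (hγε : γ * ε < 1) :
    ∫⁻ ω, ENNReal.ofReal (φ (g ω)) ∂μ
      ≤ ENNReal.ofReal (γ * η / (1 - γ * ε)) * ∫⁻ ω, ENNReal.ofReal (φ (f ω)) ∂μ := by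
  have hβ0 : 0 < β := lt_trans one_pos hβ
  -- φ is nondecreasing on [0, ∞)
  have hmono : ∀ s t : ℝ, 0 ≤ s → s ≤ t → φ s ≤ φ t := by
    intro s t hs hst
    rcases (hs.trans hst).eq_or_lt with h0 | ht
    · have hs0 : s = 0 := le_antisymm (hst.trans h0.symm.le) hs
      rw [hs0, ← h0]
    · have hab : (1 - s / t) + s / t = 1 := by ring
      have hb0 : 0 ≤ s / t := div_nonneg hs ht.le
      have ha0 : 0 ≤ 1 - s / t := by
        have : s / t ≤ 1 := (div_le_one ht).2 hst
        linarith
      have key := hconv.2 (self_mem_Ici : (0:ℝ) ∈ Ici 0) (mem_Ici.2 ht.le) ha0 hb0 hab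
      have heq : (1 - s / t) • (0:ℝ) + (s / t) • t = s := by
        rw [smul_zero, zero_add, smul_eq_mul, div_mul_cancel₀ s ht.ne']
      rw [heq] at key
      have hφt : 0 ≤ φ t := hφnonneg t ht.le
      have hst1 : s / t ≤ 1 := (div_le_one ht).2 hst
      calc φ s ≤ (1 - s / t) • φ 0 + (s / t) • φ t := key
        _ = (s / t) * φ t := by rw [hφ0]; simp [smul_eq_mul]
        _ ≤ 1 * φ t := by apply mul_le_mul_of_nonneg_right hst1 hφt
        _ = φ t := one_mul _
  -- the monotone extension ψ
  set ψ : ℝ → ℝ := fun x => φ (max x 0) with hψdef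
  have hψmono : Monotone ψ := fun x y hxy =>
    hmono _ _ (le_max_right _ _) (max_le_max hxy le_rfl)
  have hψ0 : ψ 0 = 0 := by simp [hψdef, hφ0]
  have hψnn : ∀ x, 0 ≤ ψ x := fun x => hφnonneg _ (le_max_right _ _)
  have hψmeas : Measurable ψ := hψmono.measurable
  have hψeq : ∀ x : ℝ, 0 ≤ x → ψ x = φ x := fun x hx => by
    simp [hψdef, max_eq_left hx]
  -- rewrite the goal in terms of ψ
  have hgoalL : ∫⁻ ω, ENNReal.ofReal (φ (g ω)) ∂μ = ∫⁻ ω, ENNReal.ofReal (ψ (g ω)) ∂μ :=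
    lintegral_congr fun ω => by rw [hψeq _ (hg0 ω)]
  have hgoalR : ∫⁻ ω, ENNReal.ofReal (φ (f ω)) ∂μ = ∫⁻ ω, ENNReal.ofReal (ψ (f ω)) ∂μ :=
    lintegral_congr fun ω => by rw [hψeq _ (hf0 ω)]
  rw [hgoalL, hgoalR]
  -- degenerate cases : γ ≤ 0 or η ≤ 0 force φ = 0 on (0, ∞)
  by_cases hγpos : 0 < γ
  swap
  · push_neg at hγpos
    have hz : ∀ s : ℝ, 0 < s → φ s = 0 := by
      intro s hs
      have h1 := hγ (β⁻¹ * s) (by positivity)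
      rw [mul_inv_cancel_left₀ (ne_of_gt hβ0)] at h1
      have h2 : γ * φ (β⁻¹ * s) ≤ 0 :=
        mul_nonpos_of_nonpos_of_nonneg hγpos (hφnonneg _ (by positivity))
      exact le_antisymm (h1.trans h2) (hφnonneg s hs.le)
    have : ∀ ω, ENNReal.ofReal (ψ (g ω)) = 0 := by
      intro ω
      rcases (hg0 ω).eq_or_lt with h0 | h0
      · simp [hψdef, ← h0, hφ0]
      · simp [hψeq _ (hg0 ω), hz _ h0]
    rw [lintegral_congr this, lintegral_zero]
    exact bot_le
  by_cases hηpos : 0 < η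
  swap
  · push_neg at hηpos
    have hz : ∀ s : ℝ, 0 < s → φ s = 0 := by
      intro s hs
      have h1 := hη (δ * s) (by positivity)
      rw [inv_mul_cancel_left₀ (ne_of_gt hδ)] at h1
      have h2 : η * φ (δ * s) ≤ 0 :=
        mul_nonpos_of_nonpos_of_nonneg hηpos (hφnonneg _ (by positivity))
      exact le_antisymm (h1.trans h2) (hφnonneg s hs.le)
    have : ∀ ω, ENNReal.ofReal (ψ (g ω)) = 0 := by
      intro ω
      rcases (hg0 ω).eq_or_lt with h0 | h0
      · simp [hψdef, ← h0, hφ0]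
      · simp [hψeq _ (hg0 ω), hz _ h0]
    rw [lintegral_congr this, lintegral_zero]
    exact bot_le
  -- main case
  have h1γε : 0 < 1 - γ * ε := by linarith
  have hC0 : 0 ≤ γ * η / (1 - γ * ε) := by positivity
  -- key estimate for any truncation-like g'
  have key : ∀ g' : Ω → ℝ, Measurable g' → (∀ ω, 0 ≤ g' ω) →
      (∀ lam : ℝ, 0 < lam →
        μ {ω | β * lam < g' ω ∧ f ω ≤ δ * lam} ≤ ENNReal.ofReal ε * μ {ω | lam < g' ω}) →
      (∫⁻ ω, ENNReal.ofReal (ψ (g' ω)) ∂μ) ≠ ∞ →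
      ∫⁻ ω, ENNReal.ofReal (ψ (g' ω)) ∂μ
        ≤ ENNReal.ofReal (γ * η / (1 - γ * ε)) * ∫⁻ ω, ENNReal.ofReal (ψ (f ω)) ∂μ := by
    intro g' hg'm hg'0 hgood' hfin
    set A := ∫⁻ ω, ENNReal.ofReal (ψ (g' ω)) ∂μ with hA
    set B := ∫⁻ ω, ENNReal.ofReal (ψ (β⁻¹ * g' ω)) ∂μ with hB
    set D := ∫⁻ ω, ENNReal.ofReal (ψ (δ⁻¹ * f ω)) ∂μ with hD
    set F := ∫⁻ ω, ENNReal.ofReal (ψ (f ω)) ∂μ with hF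
    -- level inequality
    have hlam : ∀ lam : ℝ, 0 < lam →
        μ {ω | lam < β⁻¹ * g' ω} ≤ ENNReal.ofReal ε * μ {ω | lam < g' ω}
          + μ {ω | lam < δ⁻¹ * f ω} := by
      intro lam hlam
      have hseteq : {ω | lam < β⁻¹ * g' ω} = {ω | β * lam < g' ω} := by
        ext ω
        simp only [mem_setOf_eq]
        exact lt_inv_mul_iff₀ hβ0
      rw [hseteq]
      have h1 : μ {ω | β * lam < g' ω}
          ≤ μ ({ω | β * lam < g' ω} ∩ {ω | f ω ≤ δ * lam})
            + μ ({ω | β * lam < g' ω} \ {ω | f ω ≤ δ * lam}) :=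
        measure_le_inter_add_diff μ _ _
      refine h1.trans (add_le_add ?_ ?_)
      · have : {ω | β * lam < g' ω} ∩ {ω | f ω ≤ δ * lam}
            = {ω | β * lam < g' ω ∧ f ω ≤ δ * lam} := rfl
        rw [this]; exact hgood' lam hlam
      · apply measure_mono
        intro ω hω
        simp only [mem_diff, mem_setOf_eq, not_le] at hω
        simp only [mem_setOf_eq]
        exact (lt_inv_mul_iff₀ hδ).2 hω.2
    -- measure of level sets is antitone, hence measurable in t
    have hantY : Measurable fun t : ℝ => μ {ω | t < ψ (g' ω)} := by
      apply Antitone.measurable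
      intro s t hst
      exact measure_mono fun ω hω => lt_of_le_of_lt hst hω
    -- B ≤ ε A + D
    have hBle : B ≤ ENNReal.ofReal ε * A + D := by
      have hmX : AEMeasurable (fun ω => ψ (β⁻¹ * g' ω)) μ :=
        (hψmeas.comp (hg'm.const_mul β⁻¹)).aemeasurable
      have hmY : AEMeasurable (fun ω => ψ (g' ω)) μ := (hψmeas.comp hg'm).aemeasurable
      have hmZ : AEMeasurable (fun ω => ψ (δ⁻¹ * f ω)) μ :=
        (hψmeas.comp (hf.const_mul δ⁻¹)).aemeasurable
      rw [hB, hA, hD,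
        lintegral_eq_lintegral_meas_lt μ (Eventually.of_forall fun ω => hψnn _) hmX,
        lintegral_eq_lintegral_meas_lt μ (Eventually.of_forall fun ω => hψnn _) hmY,
        lintegral_eq_lintegral_meas_lt μ (Eventually.of_forall fun ω => hψnn _) hmZ]
      have hlevel := level_aux μ (fun ω => β⁻¹ * g' ω) g' (fun ω => δ⁻¹ * f ω) hg'm
        (hf.const_mul δ⁻¹) (fun ω => mul_nonneg (inv_nonneg.2 hβ0.le) (hg'0 ω)) hg'0 (fun ω => mul_nonneg (inv_nonneg.2 hδ.le) (hf0 ω))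
        (ENNReal.ofReal ε) ENNReal.ofReal_ne_top hlam ψ hψmono hψ0
      have step1 : (∫⁻ t in Ioi (0:ℝ), μ {ω | t < ψ (β⁻¹ * g' ω)})
          ≤ ∫⁻ t in Ioi (0:ℝ),
              (ENNReal.ofReal ε * μ {ω | t < ψ (g' ω)} + μ {ω | t < ψ (δ⁻¹ * f ω)}) := by
        apply lintegral_mono_ae
        rw [ae_restrict_iff' measurableSet_Ioi]
        exact Eventually.of_forall fun t ht => hlevel t ht
      have step2 : (∫⁻ t in Ioi (0:ℝ),
              (ENNReal.ofReal ε * μ {ω | t < ψ (g' ω)} + μ {ω | t < ψ (δ⁻¹ * f ω)}))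
          = ENNReal.ofReal ε * (∫⁻ t in Ioi (0:ℝ), μ {ω | t < ψ (g' ω)})
              + ∫⁻ t in Ioi (0:ℝ), μ {ω | t < ψ (δ⁻¹ * f ω)} := by
        rw [lintegral_add_left (hantY.const_mul _), lintegral_const_mul _ hantY]
      exact step1.trans (le_of_eq step2)
    -- A ≤ γ B
    have hAle : A ≤ ENNReal.ofReal γ * B := by
      have heq : ∫⁻ ω, ENNReal.ofReal γ * ENNReal.ofReal (ψ (β⁻¹ * g' ω)) ∂μ
          = ENNReal.ofReal γ * B :=
        lintegral_const_mul _ ((hψmeas.comp (hg'm.const_mul β⁻¹)).ennreal_ofReal)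
      rw [hA, ← heq]
      apply lintegral_mono
      intro ω
      dsimp only
      rcases (hg'0 ω).eq_or_lt with h0 | h0
      · simp [← h0, hψ0]
      · have hb : 0 < β⁻¹ * g' ω := by positivity
        have h1 := hγ (β⁻¹ * g' ω) hb
        rw [mul_inv_cancel_left₀ (ne_of_gt hβ0)] at h1
        rw [hψeq _ (hg'0 ω), hψeq _ hb.le]
        calc ENNReal.ofReal (φ (g' ω)) ≤ ENNReal.ofReal (γ * φ (β⁻¹ * g' ω)) :=
            ENNReal.ofReal_le_ofReal h1
          _ = ENNReal.ofReal γ * ENNReal.ofReal (φ (β⁻¹ * g' ω)) :=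
            ENNReal.ofReal_mul hγpos.le
    -- D ≤ η F
    have hDle : D ≤ ENNReal.ofReal η * F := by
      have heq : ∫⁻ ω, ENNReal.ofReal η * ENNReal.ofReal (ψ (f ω)) ∂μ
          = ENNReal.ofReal η * F :=
        lintegral_const_mul _ ((hψmeas.comp hf).ennreal_ofReal)
      rw [hD, ← heq]
      apply lintegral_mono
      intro ω
      dsimp only
      rcases (hf0 ω).eq_or_lt with h0 | h0
      · simp [← h0, hψ0]
      · have h1 := hη (f ω) h0
        rw [hψeq _ (by positivity : (0:ℝ) ≤ δ⁻¹ * f ω), hψeq _ (hf0 ω)]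
        calc ENNReal.ofReal (φ (δ⁻¹ * f ω)) ≤ ENNReal.ofReal (η * φ (f ω)) :=
            ENNReal.ofReal_le_ofReal h1
          _ = ENNReal.ofReal η * ENNReal.ofReal (φ (f ω)) :=
            ENNReal.ofReal_mul hηpos.le
    -- combine
    have hcomb : A ≤ ENNReal.ofReal (γ * ε) * A + ENNReal.ofReal (γ * η) * F := by
      calc A ≤ ENNReal.ofReal γ * B := hAle
        _ ≤ ENNReal.ofReal γ * (ENNReal.ofReal ε * A + D) := by gcongr
        _ ≤ ENNReal.ofReal γ * (ENNReal.ofReal ε * A + ENNReal.ofReal η * F) := by gcongr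
        _ = ENNReal.ofReal (γ * ε) * A + ENNReal.ofReal (γ * η) * F := by
            rw [mul_add, ← mul_assoc, ← mul_assoc, ← ENNReal.ofReal_mul hγpos.le,
              ← ENNReal.ofReal_mul hγpos.le]
    by_cases hFtop : F = ∞
    · rw [hFtop, ENNReal.mul_top]
      · exact le_top
      · simp only [ne_eq, ENNReal.ofReal_eq_zero, not_le]
        positivity
    · -- all finite; pass to real numbers
      have hRHSne : ENNReal.ofReal (γ * ε) * A + ENNReal.ofReal (γ * η) * F ≠ ∞ := by
        apply ENNReal.add_ne_top.2
        exact ⟨ENNReal.mul_ne_top ENNReal.ofReal_ne_top hfin,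
          ENNReal.mul_ne_top ENNReal.ofReal_ne_top hFtop⟩
      have htr := ENNReal.toReal_mono hRHSne hcomb
      rw [ENNReal.toReal_add (ENNReal.mul_ne_top ENNReal.ofReal_ne_top hfin)
          (ENNReal.mul_ne_top ENNReal.ofReal_ne_top hFtop),
        ENNReal.toReal_mul, ENNReal.toReal_mul,
        ENNReal.toReal_ofReal (by positivity : (0:ℝ) ≤ γ * ε),
        ENNReal.toReal_ofReal (by positivity : (0:ℝ) ≤ γ * η)] at htr
      set a := A.toReal with har
      set fr := F.toReal with hfr
      have hmain : a ≤ γ * η / (1 - γ * ε) * fr := by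
        rw [div_mul_eq_mul_div, le_div_iff₀ h1γε]
        nlinarith
      calc A = ENNReal.ofReal a := (ENNReal.ofReal_toReal hfin).symm
        _ ≤ ENNReal.ofReal (γ * η / (1 - γ * ε) * fr) := ENNReal.ofReal_le_ofReal hmain
        _ = ENNReal.ofReal (γ * η / (1 - γ * ε)) * ENNReal.ofReal fr :=
            ENNReal.ofReal_mul hC0
        _ = ENNReal.ofReal (γ * η / (1 - γ * ε)) * F := by
            rw [hfr, ENNReal.ofReal_toReal hFtop]
  -- truncations
  set G : ℕ → Ω → ℝ := fun n ω => min (g ω) n with hGdef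
  have hGmeas : ∀ n, Measurable (G n) := fun n => hg.min measurable_const
  have hG0 : ∀ n ω, 0 ≤ G n ω := fun n ω => le_min (hg0 ω) (Nat.cast_nonneg n)
  have hGgood : ∀ n : ℕ, ∀ lam : ℝ, 0 < lam →
      μ {ω | β * lam < G n ω ∧ f ω ≤ δ * lam} ≤ ENNReal.ofReal ε * μ {ω | lam < G n ω} := by
    intro n lam hlam
    by_cases hn : β * lam < n
    · have hset : {ω | lam < G n ω} = {ω | lam < g ω} := by
        ext ω
        simp only [hGdef, mem_setOf_eq, lt_min_iff]
        constructor
        · exact fun h => h.1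
        · intro h
          exact ⟨h, lt_trans (lt_mul_of_one_lt_left hlam hβ) hn⟩
      calc μ {ω | β * lam < G n ω ∧ f ω ≤ δ * lam}
          ≤ μ {ω | β * lam < g ω ∧ f ω ≤ δ * lam} := by
            apply measure_mono
            intro ω hω
            simp only [hGdef, mem_setOf_eq, lt_min_iff] at hω
            exact ⟨hω.1.1, hω.2⟩
        _ ≤ ENNReal.ofReal ε * μ {ω | lam < g ω} := hgood lam hlam
        _ = ENNReal.ofReal ε * μ {ω | lam < G n ω} := by rw [hset]
    · have : {ω | β * lam < G n ω ∧ f ω ≤ δ * lam} = ∅ := by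
        ext ω
        simp only [hGdef, mem_setOf_eq, mem_empty_iff_false, iff_false, not_and]
        intro h
        exact absurd (lt_of_lt_of_le h (min_le_right _ _)) hn
      rw [this]
      simp
  have hGfin : ∀ n : ℕ, (∫⁻ ω, ENNReal.ofReal (ψ (G n ω)) ∂μ) ≠ ∞ := by
    intro n
    have hb : ∀ ω, ENNReal.ofReal (ψ (G n ω)) ≤ ENNReal.ofReal (ψ n) := fun ω =>
      ENNReal.ofReal_le_ofReal (hψmono (min_le_right _ _))
    have hle : (∫⁻ ω, ENNReal.ofReal (ψ (G n ω)) ∂μ) ≤ ENNReal.ofReal (ψ n) := by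
      calc (∫⁻ ω, ENNReal.ofReal (ψ (G n ω)) ∂μ) ≤ ∫⁻ _, ENNReal.ofReal (ψ n) ∂μ :=
          lintegral_mono hb
        _ = ENNReal.ofReal (ψ n) := by rw [lintegral_const, measure_univ, mul_one]
    exact ne_top_of_le_ne_top ENNReal.ofReal_ne_top hle
  -- monotone convergence
  have hMC : ∫⁻ ω, ENNReal.ofReal (ψ (g ω)) ∂μ
      = ⨆ n : ℕ, ∫⁻ ω, ENNReal.ofReal (ψ (G n ω)) ∂μ := by
    have h1 := lintegral_iSup (μ := μ) (f := fun (n : ℕ) ω => ENNReal.ofReal (ψ (G n ω)))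
      (fun n => ((hψmeas.comp (hGmeas n)).ennreal_ofReal))
      (fun m n hmn ω => ENNReal.ofReal_le_ofReal
        (hψmono (min_le_min le_rfl (Nat.cast_le.2 hmn))))
    rw [← h1]
    apply lintegral_congr
    intro ω
    apply le_antisymm
    · obtain ⟨n, hn⟩ := exists_nat_ge (g ω)
      refine le_iSup_of_le n ?_
      rw [show G n ω = g ω from min_eq_left hn]
    · exact iSup_le fun n => ENNReal.ofReal_le_ofReal (hψmono (min_le_left _ _))
  rw [hMC]
  exact iSup_le fun n => key (G n) (hGmeas n) (hG0 n) (hGgood n) (hGfin n)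
end

section
/- Let X be a separable Banach space, let (x_n)_{n≥1} be a dense sequence in X, and let (x_n^*)_{n≥1} ⊆ X^* be a norming sequence for it, i.e., ‖x_n^*‖ = 1 and ⟨x_n, x_n^*⟩ = ‖x_n‖ for every n. Let M : [0,∞) × Ω → X be a stochastic process on a probability space (Ω,F,P) all of whose paths are càdlàg. Then almost every path t ↦ M_t(ω) is continuous on [0,∞) if and only if for every n ≥ 1 almost every path t ↦ ⟨M_t(ω), x_n^*⟩ is continuous on [0,∞). -/
open MeasureTheory ProbabilityTheory Filter Set
open scoped ENNReal NNReal Topology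

/-- The norming sequence separates points. -/
lemma norming_separates
    {X : Type*} [NormedAddCommGroup X] [NormedSpace ℝ X]
    (x : ℕ → X) (hx : DenseRange x)
    (x' : ℕ → X →L[ℝ] ℝ) (hnorming : ∀ n, ‖x' n‖ = 1 ∧ x' n (x n) = ‖x n‖)
    {y : X} (hy : y ≠ 0) : ∃ n, x' n y ≠ 0 := by
  have hy0 : 0 < ‖y‖ := norm_pos_iff.mpr hy
  have h3 : 0 < ‖y‖ / 3 := by positivity
  obtain ⟨n, hn⟩ := Metric.denseRange_iff.mp hx y (‖y‖ / 3) h3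
  refine ⟨n, ?_⟩
  have hdist : ‖x n - y‖ < ‖y‖ / 3 := by
    rw [← dist_eq_norm]
    simpa [dist_comm] using hn
  have hxn : ‖y‖ - ‖y‖ / 3 ≤ ‖x n‖ := by
    have := norm_sub_norm_le (x n) y
    linarith [abs_le.mp (abs_norm_sub_norm_le (x n) y)]
  have hb : |x' n (x n - y)| ≤ ‖x n - y‖ := by
    calc |x' n (x n - y)| ≤ ‖x' n‖ * ‖x n - y‖ := (x' n).le_opNorm _
    _ = ‖x n - y‖ := by rw [(hnorming n).1, one_mul]
  have key : 0 < x' n y := by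
    have : x' n y = x' n (x n) - x' n (x n - y) := by
      rw [map_sub]; ring
    rw [this, (hnorming n).2]
    have h1 : x' n (x n - y) ≤ ‖x n - y‖ := (le_abs_self _).trans hb
    linarith
  exact ne_of_gt key

/-- For a càdlàg `X`-valued process `M` and a norming sequence `(x'_n)` of functionals for a
dense sequence `(x_n)`, a.e. path of `M` is continuous if and only if for every `n` a.e. path
of `⟨M, x'_n⟩` is continuous. -/
theorem continuous_paths_iff_norming_functionals
    {Ω : Type*} {mΩ : MeasurableSpace Ω} (μ : Measure Ω) [IsProbabilityMeasure μ]
    (X : Type*) [NormedAddCommGroup X] [NormedSpace ℝ X] [CompleteSpace X]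
    (x : ℕ → X) (hx : DenseRange x)
    (x' : ℕ → X →L[ℝ] ℝ) (hnorming : ∀ n, ‖x' n‖ = 1 ∧ x' n (x n) = ‖x n‖)
    (M : ℝ≥0 → Ω → X)
    (hright : ∀ ω, ∀ t : ℝ≥0, ContinuousWithinAt (fun s => M s ω) (Set.Ici t) t)
    (hleft : ∀ ω, ∀ t : ℝ≥0, 0 < t → ∃ L : X, Tendsto (fun s => M s ω) (𝓝[<] t) (𝓝 L)) :
    (∀ᵐ ω ∂μ, Continuous (fun t : ℝ≥0 => M t ω)) ↔
      ∀ n : ℕ, ∀ᵐ ω ∂μ, Continuous (fun t : ℝ≥0 => x' n (M t ω)) := by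
  constructor
  · intro h n
    filter_upwards [h] with ω hω
    exact (x' n).continuous.comp hω
  · intro h
    rw [← ae_all_iff] at h
    filter_upwards [h] with ω hω
    rw [continuous_iff_continuousAt]
    intro t
    rcases eq_or_lt_of_le (zero_le : (0 : ℝ≥0) ≤ t) with ht0 | ht0
    · have := hright ω t
      rw [← ht0] at this ⊢
      rwa [show Set.Ici (0 : ℝ≥0) = Set.univ from Set.Ici_bot,
        continuousWithinAt_univ] at this
    · obtain ⟨L, hL⟩ := hleft ω t ht0
      have hne : (𝓝[<] t).NeBot := nhdsWithin_Iio_self_neBot' ⟨0, ht0⟩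
      have hLeq : L = M t ω := by
        by_contra hLne
        obtain ⟨n, hn⟩ := norming_separates x hx x' hnorming (sub_ne_zero.mpr hLne)
        have h1 : Tendsto (fun s => x' n (M s ω)) (𝓝[<] t) (𝓝 (x' n L)) :=
          ((x' n).continuous.tendsto L).comp hL
        have h2 : Tendsto (fun s => x' n (M s ω)) (𝓝[<] t) (𝓝 (x' n (M t ω))) :=
          ((hω n).tendsto t).mono_left nhdsWithin_le_nhds
        have := tendsto_nhds_unique h1 h2
        exact hn (by rw [map_sub, this, sub_self])
      rw [hLeq] at hL
      have hR : Tendsto (fun s => M s ω) (𝓝[≥] t) (𝓝 (M t ω)) := hright ω t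
      have hsup : 𝓝[<] t ⊔ 𝓝[≥] t = 𝓝 t := nhdsLT_sup_nhdsGE t
      unfold ContinuousAt
      rw [← hsup]
      exact hL.sup hR
end

section
/- Let X be a separable Banach space with its Borel σ-algebra and let N ≥ 1. Let (ξ_n)_{n=1}^N and (ξ'_n)_{n=1}^N be X-valued random variables on a probability space (Ω,F,P) such that the ξ_1,…,ξ_N are mutually independent, the ξ'_1,…,ξ'_N are mutually independent, each ξ_n and each ξ'_n is symmetric (i.e., has the same distribution as its negative), and for every n and every Borel set A ⊆ X with 0 ∉ A one has P(ξ'_n ∈ A) ≤ P(ξ_n ∈ A). Then for every continuous convex function φ : X → [0,∞) which is even (φ(−x) = φ(x) for all x ∈ X) one has E φ(Σ_{n=1}^N ξ'_n) ≤ E φ(Σ_{n=1}^N ξ_n), where both expectations are taken in [0,∞]. -/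
open MeasureTheory ProbabilityTheory Filter Set
open scoped ENNReal NNReal Topology

-- core lemma
lemma core_dom {X : Type*} [MeasurableSpace X] [Zero X] [MeasurableSingletonClass X]
    {ν ν' : Measure X} [IsProbabilityMeasure ν] [IsProbabilityMeasure ν']
    (hdom : ∀ A : Set X, MeasurableSet A → (0 : X) ∉ A → ν' A ≤ ν A)
    {h : X → ℝ≥0∞} (hm : Measurable h) (hge : ∀ x, h 0 ≤ h x) :
    ∫⁻ x, h x ∂ν' ≤ ∫⁻ x, h x ∂ν := by
  by_cases htop : h 0 = ⊤
  · have hall : ∀ x, h x = ⊤ := fun x => top_le_iff.mp (htop ▸ hge x)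
    rw [lintegral_congr hall, lintegral_congr hall, lintegral_const, lintegral_const,
      measure_univ, measure_univ]
  · have hh : ∀ x, h x = (h x - h 0) + h 0 := fun x => (tsub_add_cancel_of_le (hge x)).symm
    rw [lintegral_congr hh, show ∫⁻ x, h x ∂ν = ∫⁻ x, (h x - h 0) + h 0 ∂ν from lintegral_congr hh,
      lintegral_add_right _ measurable_const, lintegral_add_right _ measurable_const]
    simp only [lintegral_const, measure_univ, one_mul]
    refine add_le_add ?_ le_rfl
    set g : X → ℝ≥0∞ := fun x => h x - h 0 with hg
    have hgm : Measurable g := hm.sub measurable_const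
    have hgi : g = Set.indicator ({(0:X)}ᶜ) g := by
      funext x
      by_cases hx : x = (0:X)
      · simp [hx, hg, tsub_self]
      · simp [Set.indicator_of_mem, hx]
    rw [hgi, lintegral_indicator (measurableSet_singleton (0:X)).compl,
      lintegral_indicator (measurableSet_singleton (0:X)).compl]
    refine lintegral_mono' (Measure.le_iff.mpr fun s hs => ?_) le_rfl
    rw [Measure.restrict_apply hs, Measure.restrict_apply hs]
    exact hdom _ (hs.inter (measurableSet_singleton 0).compl) (fun h0 => h0.2 rfl)

section

variable {X : Type*} [NormedAddCommGroup X] [NormedSpace ℝ X]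
    [TopologicalSpace.SeparableSpace X] [MeasurableSpace X] [BorelSpace X]

instance (priority := 100) sum_indep_aux_secondCountable : SecondCountableTopology X :=
  UniformSpace.secondCountable_of_separable X

/-- Symmetry of the law of the sum under a product of symmetric measures. -/
lemma pi_sum_symm {m : ℕ} (σ : Fin m → Measure X) [∀ j, IsProbabilityMeasure (σ j)]
    (hsym : ∀ j, (σ j).map Neg.neg = σ j)
    {f : X → ℝ≥0∞} (hf : Measurable f) :
    ∫⁻ y, f (-∑ j, y j) ∂Measure.pi σ = ∫⁻ y, f (∑ j, y j) ∂Measure.pi σ := by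
  have hmp : MeasurePreserving (fun (a : Fin m → X) i => -(a i))
      (Measure.pi σ) (Measure.pi σ) :=
    MeasureTheory.measurePreserving_pi σ σ fun i => ⟨measurable_neg, hsym i⟩
  have hsum : Measurable fun y : Fin m → X => ∑ j, y j :=
    Finset.measurable_sum Finset.univ fun j _ => measurable_pi_apply j
  calc ∫⁻ y, f (-∑ j, y j) ∂Measure.pi σ
      = ∫⁻ y, (fun z : Fin m → X => f (∑ j, z j)) (fun i => -(y i)) ∂Measure.pi σ := by
        congr 1; funext y; simp [Finset.sum_neg_distrib]
    _ = ∫⁻ y, f (∑ j, y j) ∂Measure.pi σ := hmp.lintegral_comp (hf.comp hsum)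

/-- One-coordinate replacement step. -/
lemma step_replace {m : ℕ} (ρ ρ' : Fin (m + 1) → Measure X)
    [∀ j, IsProbabilityMeasure (ρ j)] [∀ j, IsProbabilityMeasure (ρ' j)]
    (hsymρ : ∀ j, (ρ j).map Neg.neg = ρ j)
    (i : Fin (m + 1)) (hsame : ∀ j, j ≠ i → ρ' j = ρ j)
    (hdom : ∀ A : Set X, MeasurableSet A → (0 : X) ∉ A → ρ' i A ≤ ρ i A)
    (φ : X → ℝ) (hcont : Continuous φ) (hconv : ConvexOn ℝ Set.univ φ)
    (heven : ∀ x : X, φ (-x) = φ x) (hnonneg : ∀ x : X, 0 ≤ φ x) :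
    ∫⁻ x, ENNReal.ofReal (φ (∑ n, x n)) ∂Measure.pi ρ'
      ≤ ∫⁻ x, ENNReal.ofReal (φ (∑ n, x n)) ∂Measure.pi ρ := by
  set Ψ : X → ℝ≥0∞ := fun x => ENNReal.ofReal (φ x) with hΨdef
  have hΨ : Measurable Ψ := hcont.measurable.ennreal_ofReal
  have hsum : Measurable fun y : Fin m → X => ∑ j, y j :=
    Finset.measurable_sum Finset.univ fun j _ => measurable_pi_apply j
  set π : Measure (Fin m → X) := Measure.pi fun j => ρ (i.succAbove j) with hπdef
  have hπ' : (Measure.pi fun j => ρ' (i.succAbove j)) = π := by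
    rw [hπdef]; congr 1; funext j; exact hsame _ (Fin.succAbove_ne i j)
  have hG : Measurable fun p : X × (Fin m → X) => Ψ (p.1 + ∑ j, p.2 j) :=
    hΨ.comp (measurable_fst.add (hsum.comp measurable_snd))
  have key : ∀ (κ : Fin (m + 1) → Measure X), (∀ j, IsProbabilityMeasure (κ j)) →
      ∫⁻ x, Ψ (∑ n, x n) ∂Measure.pi κ
        = ∫⁻ x₀, ∫⁻ y, Ψ (x₀ + ∑ j, y j) ∂(Measure.pi fun j => κ (i.succAbove j)) ∂κ i := by
    intro κ hκ
    haveI := hκ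
    calc ∫⁻ x, Ψ (∑ n, x n) ∂Measure.pi κ
        = ∫⁻ x, (fun p : X × (Fin m → X) => Ψ (p.1 + ∑ j, p.2 j))
            ((MeasurableEquiv.piFinSuccAbove (fun _ => X) i) x) ∂Measure.pi κ := by
          refine lintegral_congr fun x => ?_
          show Ψ _ = Ψ (x i + ∑ j, x (i.succAbove j))
          simp [MeasurableEquiv.piFinSuccAbove, Fin.insertNthEquiv_symm_apply, Fin.removeNth,
            ← Fin.sum_univ_succAbove (fun n => x n) i]
      _ = ∫⁻ p, (fun p : X × (Fin m → X) => Ψ (p.1 + ∑ j, p.2 j)) p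
            ∂((κ i).prod (Measure.pi fun j => κ (i.succAbove j))) :=
          (MeasureTheory.measurePreserving_piFinSuccAbove κ i).lintegral_comp hG
      _ = ∫⁻ x₀, ∫⁻ y, Ψ (x₀ + ∑ j, y j) ∂(Measure.pi fun j => κ (i.succAbove j)) ∂κ i :=
          lintegral_prod _ hG.aemeasurable
  rw [key ρ inferInstance, key ρ' inferInstance, hπ']
  set H : X → ℝ≥0∞ := fun x₀ => ∫⁻ y, Ψ (x₀ + ∑ j, y j) ∂π with hHdef
  have hHm : Measurable H := hG.lintegral_prod_right'
  have hHeven : ∀ a, H (-a) = H a := by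
    intro a
    calc H (-a) = ∫⁻ y, (fun t => Ψ (a + t)) (-∑ j, y j) ∂π := by
          refine lintegral_congr fun y => ?_
          show Ψ (-a + ∑ j, y j) = Ψ (a + -∑ j, y j)
          rw [hΨdef]
          dsimp only
          rw [show (a + -∑ j, y j) = -(-a + ∑ j, y j) by abel, heven]
      _ = ∫⁻ y, (fun t => Ψ (a + t)) (∑ j, y j) ∂π :=
          pi_sum_symm _ (fun j => hsymρ _)
            (hΨ.comp (measurable_const.add measurable_id))
      _ = H a := rfl
  have hHge : ∀ a, H 0 ≤ H a := by
    intro a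
    have hpt : ∀ s : X, Ψ s + Ψ s ≤ Ψ (a + s) + Ψ (-a + s) := by
      intro s
      have hmid : (1/2 : ℝ) • (a + s) + (1/2 : ℝ) • (-a + s) = s := by module
      have hcv := hconv.2 (Set.mem_univ (a + s)) (Set.mem_univ (-a + s))
        (by norm_num : (0:ℝ) ≤ 1/2) (by norm_num : (0:ℝ) ≤ 1/2) (by norm_num)
      rw [hmid, smul_eq_mul, smul_eq_mul] at hcv
      have h2 : φ s + φ s ≤ φ (a + s) + φ (-a + s) := by nlinarith
      calc Ψ s + Ψ s = ENNReal.ofReal (φ s + φ s) := by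
            rw [ENNReal.ofReal_add (hnonneg s) (hnonneg s)]
        _ ≤ ENNReal.ofReal (φ (a + s) + φ (-a + s)) := ENNReal.ofReal_le_ofReal h2
        _ = Ψ (a + s) + Ψ (-a + s) := ENNReal.ofReal_add (hnonneg _) (hnonneg _)
    have hm1 : Measurable fun y : Fin m → X => Ψ (∑ j, y j) := hΨ.comp hsum
    have hma : Measurable fun y : Fin m → X => Ψ (a + ∑ j, y j) :=
      hΨ.comp (measurable_const.add hsum)
    have h00 : H 0 = ∫⁻ y, Ψ (∑ j, y j) ∂π :=
      lintegral_congr fun y => by rw [zero_add]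
    have hH2 : H 0 + H 0 ≤ H a + H (-a) := by
      have hl : H 0 + H 0 = ∫⁻ y, (Ψ (∑ j, y j) + Ψ (∑ j, y j)) ∂π := by
        rw [lintegral_add_left hm1, h00]
      have hr : H a + H (-a) = ∫⁻ y, (Ψ (a + ∑ j, y j) + Ψ (-a + ∑ j, y j)) ∂π := by
        rw [lintegral_add_left hma]
      rw [hl, hr]
      exact lintegral_mono fun y => hpt _
    rw [hHeven a] at hH2
    rwa [← two_mul, ← two_mul,
      ENNReal.mul_le_mul_iff_right (two_ne_zero) (ENNReal.ofNat_ne_top)] at hH2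
  exact core_dom hdom hHm hHge

/-- The joint law of independent random variables is the product of the marginal laws. -/
lemma iIndepFun_map_pi {Ω : Type*} {mΩ : MeasurableSpace Ω} (μ : Measure Ω)
    [IsProbabilityMeasure μ] {N : ℕ} (ξ : Fin N → Ω → X)
    (hmeas : ∀ n, Measurable (ξ n))
    (hindep : iIndepFun ξ μ) :
    μ.map (fun ω n => ξ n ω) = Measure.pi (fun n => μ.map (ξ n)) := by
  haveI : ∀ n, IsProbabilityMeasure (μ.map (ξ n)) :=
    fun n => Measure.isProbabilityMeasure_map (hmeas n).aemeasurable
  have hT : Measurable fun ω n => ξ n ω := measurable_pi_lambda _ hmeas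
  symm
  apply Measure.pi_eq
  intro s hs
  rw [Measure.map_apply hT (MeasurableSet.univ_pi hs)]
  have hpre : (fun ω n => ξ n ω) ⁻¹' (Set.univ.pi s) = ⋂ n ∈ Finset.univ, ξ n ⁻¹' s n := by
    ext ω; simp [Set.mem_pi]
  rw [hpre, hindep.measure_inter_preimage_eq_mul Finset.univ (fun n _ => hs n)]
  exact Finset.prod_congr rfl fun n _ =>
    (Measure.map_apply (hmeas n) (hs n)).symm

end


/-- **Stochastic domination for sums of independent symmetric random variables.** If the
`ξ' n` are independent symmetric, the `ξ n` are independent symmetric, and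
`P(ξ' n ∈ A) ≤ P(ξ n ∈ A)` for all Borel `A` not containing `0`, then
`E φ(∑ ξ' n) ≤ E φ(∑ ξ n)` for every continuous convex even `φ ≥ 0` (in `[0,∞]`). -/
theorem sum_indep_symmetric_domination
    {Ω X : Type*} [NormedAddCommGroup X] [NormedSpace ℝ X] [CompleteSpace X]
    [TopologicalSpace.SeparableSpace X] [MeasurableSpace X] [BorelSpace X]
    {mΩ : MeasurableSpace Ω} (μ : Measure Ω) [IsProbabilityMeasure μ]
    (N : ℕ) (ξ ξ' : Fin N → Ω → X)
    (hmeas : ∀ n, Measurable (ξ n)) (hmeas' : ∀ n, Measurable (ξ' n))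
    (hindep : iIndepFun ξ μ)
    (hindep' : iIndepFun ξ' μ)
    (hsymm : ∀ n, μ.map (ξ n) = μ.map (fun ω => -(ξ n ω)))
    (hsymm' : ∀ n, μ.map (ξ' n) = μ.map (fun ω => -(ξ' n ω)))
    (hdom : ∀ n, ∀ A : Set X, MeasurableSet A → (0 : X) ∉ A →
      μ (ξ' n ⁻¹' A) ≤ μ (ξ n ⁻¹' A))
    (φ : X → ℝ) (hcont : Continuous φ) (hconv : ConvexOn ℝ Set.univ φ)
    (heven : ∀ x : X, φ (-x) = φ x) (hnonneg : ∀ x : X, 0 ≤ φ x) :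
    ∫⁻ ω, ENNReal.ofReal (φ (∑ n : Fin N, ξ' n ω)) ∂μ
      ≤ ∫⁻ ω, ENNReal.ofReal (φ (∑ n : Fin N, ξ n ω)) ∂μ := by
  cases N with
  | zero => simp
  | succ m =>
    set Ψ : X → ℝ≥0∞ := fun x => ENNReal.ofReal (φ x) with hΨdef
    have hΨ : Measurable Ψ := hcont.measurable.ennreal_ofReal
    have hsum : Measurable fun y : Fin (m + 1) → X => ∑ j, y j :=
      Finset.measurable_sum Finset.univ fun j _ => measurable_pi_apply j
    set ν : Fin (m + 1) → Measure X := fun n => μ.map (ξ n) with hνdef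
    set ν' : Fin (m + 1) → Measure X := fun n => μ.map (ξ' n) with hν'def
    haveI hpν : ∀ n, IsProbabilityMeasure (ν n) :=
      fun n => Measure.isProbabilityMeasure_map (hmeas n).aemeasurable
    haveI hpν' : ∀ n, IsProbabilityMeasure (ν' n) :=
      fun n => Measure.isProbabilityMeasure_map (hmeas' n).aemeasurable
    have hsymν : ∀ n, (ν n).map Neg.neg = ν n := fun n => by
      rw [hνdef]
      dsimp only
      rw [Measure.map_map measurable_neg (hmeas n)]
      exact (hsymm n).symm
    have hsymν' : ∀ n, (ν' n).map Neg.neg = ν' n := fun n => by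
      rw [hν'def]
      dsimp only
      rw [Measure.map_map measurable_neg (hmeas' n)]
      exact (hsymm' n).symm
    have hdomν : ∀ n, ∀ A : Set X, MeasurableSet A → (0 : X) ∉ A → ν' n A ≤ ν n A := by
      intro n A hA h0
      rw [hνdef, hν'def]
      dsimp only
      rw [Measure.map_apply (hmeas n) hA, Measure.map_apply (hmeas' n) hA]
      exact hdom n A hA h0
    -- express both sides as integrals against product measures
    have hlaw : MeasurePreserving (fun ω n => ξ n ω) μ (Measure.pi ν) :=
      ⟨measurable_pi_lambda _ hmeas, iIndepFun_map_pi μ ξ hmeas hindep⟩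
    have hlaw' : MeasurePreserving (fun ω n => ξ' n ω) μ (Measure.pi ν') :=
      ⟨measurable_pi_lambda _ hmeas', iIndepFun_map_pi μ ξ' hmeas' hindep'⟩
    have hL : ∫⁻ ω, Ψ (∑ n, ξ n ω) ∂μ = ∫⁻ x, Ψ (∑ n, x n) ∂Measure.pi ν :=
      hlaw.lintegral_comp (hΨ.comp hsum)
    have hL' : ∫⁻ ω, Ψ (∑ n, ξ' n ω) ∂μ = ∫⁻ x, Ψ (∑ n, x n) ∂Measure.pi ν' :=
      hlaw'.lintegral_comp (hΨ.comp hsum)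
    rw [show (∫⁻ ω, ENNReal.ofReal (φ (∑ n, ξ' n ω)) ∂μ) = ∫⁻ ω, Ψ (∑ n, ξ' n ω) ∂μ from rfl,
      show (∫⁻ ω, ENNReal.ofReal (φ (∑ n, ξ n ω)) ∂μ) = ∫⁻ ω, Ψ (∑ n, ξ n ω) ∂μ from rfl,
      hL, hL']
    -- the interpolating chain of product measures
    set C : ℕ → Fin (m + 1) → Measure X :=
      fun k n => if (n : ℕ) < k then ν' n else ν n with hCdef
    haveI hpC : ∀ k n, IsProbabilityMeasure (C k n) := by
      intro k n
      rw [hCdef]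
      dsimp only
      split <;> infer_instance
    have hsymC : ∀ k n, (C k n).map Neg.neg = C k n := by
      intro k n
      rw [hCdef]
      dsimp only
      split
      · exact hsymν' n
      · exact hsymν n
    have hC0 : C 0 = ν := by funext n; simp [hCdef]
    have hCtop : C (m + 1) = ν' := by funext n; simp [hCdef, n.isLt]
    have step : ∀ k, k < m + 1 →
        (∫⁻ x, Ψ (∑ n, x n) ∂Measure.pi (C (k + 1)))
          ≤ ∫⁻ x, Ψ (∑ n, x n) ∂Measure.pi (C k) := by
      intro k hk
      haveI := hpC k
      haveI := hpC (k + 1)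
      refine step_replace (C k) (C (k + 1)) (hsymC k) ⟨k, hk⟩ ?_ ?_ φ hcont hconv heven hnonneg
      · intro j hj
        have hj' : (j : ℕ) ≠ k := fun h => hj (Fin.ext h)
        rw [hCdef]
        dsimp only
        rcases lt_trichotomy (j : ℕ) k with h | h | h
        · rw [if_pos h, if_pos (h.trans (Nat.lt_succ_self k))]
        · exact absurd h hj'
        · rw [if_neg (by omega), if_neg (by omega)]
      · intro A hA h0
        have e1 : C (k + 1) ⟨k, hk⟩ = ν' ⟨k, hk⟩ := by simp [hCdef]
        have e2 : C k ⟨k, hk⟩ = ν ⟨k, hk⟩ := by simp [hCdef]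
        rw [e1, e2]
        exact hdomν _ A hA h0
    have chain : ∀ k, k ≤ m + 1 →
        (∫⁻ x, Ψ (∑ n, x n) ∂Measure.pi (C k))
          ≤ ∫⁻ x, Ψ (∑ n, x n) ∂Measure.pi (C 0) := by
      intro k
      induction k with
      | zero => exact fun _ => le_rfl
      | succ k ih => exact fun hk => (step k (by omega)).trans (ih (by omega))
    have := chain (m + 1) le_rfl
    rwa [hC0, hCtop] at this
end
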